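/- Let N be a positive integer and let {B̄(p_i, r_i)}_{i=1}^m be a finite family of closed balls in ℝ^N (with r_i > 0) such that the closed balls {B̄(p_i, r_i/6)}_{i=1}^m are pairwise disjoint. Then for every index j ∈ {1, …, m}, the sum of 1/r_i over all indices i such that r_i ≥ r_j and B̄(p_i, r_i) ∩ B̄(p_j, r_j) ≠ ∅ is at most 4·108^N / r_j. -/

import Mathlib

open Metric
open MeasureTheory
open scoped Classical ENNReal

lemma ball_count' {N m : ℕ} (p : Fin m → EuclideanSpace ℝ (Fin N)) (f : Fin m → ℝ)
    (ρ R : ℝ) (hρ : 0 < ρ) (hR : 0 ≤ R) (s : Finset (Fin m)) (c : EuclideanSpace ℝ (Fin N))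
    (hf : ∀ i ∈ s, ρ ≤ f i)
    (hsub : ∀ i ∈ s, closedBall (p i) (f i) ⊆ closedBall c R)
    (hd : (s : Set (Fin m)).Pairwise fun i i' =>
      Disjoint (closedBall (p i) (f i)) (closedBall (p i') (f i'))) :
    (s.card : ℝ) * ρ ^ N ≤ R ^ N := by
  set μ : Measure (EuclideanSpace ℝ (Fin N)) := volume with hμ
  have hball : μ (ball 0 1) ≠ 0 := (measure_ball_pos μ 0 one_pos).ne'
  have hball' : μ (ball 0 1) ≠ ⊤ := measure_ball_lt_top.ne
  have key : (s.card : ℝ≥0∞) * ENNReal.ofReal (ρ ^ N) * μ (ball 0 1)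
      ≤ ENNReal.ofReal (R ^ N) * μ (ball 0 1) := by
    calc (s.card : ℝ≥0∞) * ENNReal.ofReal (ρ ^ N) * μ (ball 0 1)
        = ∑ i ∈ s, ENNReal.ofReal (ρ ^ N) * μ (ball 0 1) := by
          rw [Finset.sum_const, nsmul_eq_mul, mul_assoc]
      _ ≤ ∑ i ∈ s, μ (closedBall (p i) (f i)) := by
          refine Finset.sum_le_sum fun i hi => ?_
          rw [Measure.addHaar_closedBall μ (p i) (hρ.le.trans (hf i hi)),
            finrank_euclideanSpace_fin]
          gcongr
          exact hf i hi
      _ = μ (⋃ i ∈ s, closedBall (p i) (f i)) := by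
          rw [measure_biUnion_finset hd fun i _ => measurableSet_closedBall]
      _ ≤ μ (closedBall c R) := measure_mono (Set.iUnion₂_subset hsub)
      _ = ENNReal.ofReal (R ^ N) * μ (ball 0 1) := by
          rw [Measure.addHaar_closedBall μ c hR, finrank_euclideanSpace_fin]
  have key2 : (s.card : ℝ≥0∞) * ENNReal.ofReal (ρ ^ N) ≤ ENNReal.ofReal (R ^ N) :=
    (ENNReal.mul_le_mul_iff_left hball hball').mp key
  have h3 : ENNReal.ofReal ((s.card : ℝ) * ρ ^ N) ≤ ENNReal.ofReal (R ^ N) := by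
    rw [ENNReal.ofReal_mul (by positivity), ENNReal.ofReal_natCast]
    exact key2
  exact (ENNReal.ofReal_le_ofReal_iff (by positivity : (0:ℝ) ≤ R ^ N)).mp h3

lemma geom_finset_le (T : Finset ℕ) : ∑ b ∈ T, ((1:ℝ)/2)^b ≤ 2 := by
  have hsub : T ⊆ Finset.range (T.sup id + 1) := fun b hb =>
    Finset.mem_range.mpr (Nat.lt_succ_of_le (Finset.le_sup (f := id) hb))
  calc ∑ b ∈ T, ((1:ℝ)/2)^b ≤ ∑ b ∈ Finset.range (T.sup id + 1), ((1:ℝ)/2)^b :=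
        Finset.sum_le_sum_of_subset_of_nonneg hsub (fun i _ _ => by positivity)
    _ ≤ 2 := sum_geometric_two_le _


/-- The summed form of the dyadic counting argument in Proposition A.2: for each `j`,
the sum of `1/rᵢ` over the indices `i` with `rᵢ ≥ r_j` whose ball meets `B̄(p_j, r_j)`
is at most `4 · 108^N / r_j`. -/
theorem stmt_6 (N : ℕ) (hN : 0 < N) (m : ℕ)
    (p : Fin m → EuclideanSpace ℝ (Fin N)) (r : Fin m → ℝ) (hr : ∀ i, 0 < r i)
    (hdisj : Pairwise fun i j =>
      Disjoint (closedBall (p i) (r i / 6)) (closedBall (p j) (r j / 6))) :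
    ∀ j, ∑ i ∈ Finset.univ.filter (fun i =>
        r j ≤ r i ∧ (closedBall (p i) (r i) ∩ closedBall (p j) (r j)).Nonempty),
        1 / r i ≤ 4 * 108 ^ N / r j := by
  intro j
  set S := Finset.univ.filter (fun i =>
      r j ≤ r i ∧ (closedBall (p i) (r i) ∩ closedBall (p j) (r j)).Nonempty) with hS
  have hrj : 0 < r j := hr j
  -- dyadic exponent
  set g : Fin m → ℕ := fun i => Nat.log 2 ⌊r i / r j⌋₊ with hg
  -- basic facts for i ∈ S
  have hlow : ∀ i ∈ S, (2:ℝ) ^ (g i) * r j ≤ r i := by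
    intro i hi
    obtain ⟨hij, -⟩ := (Finset.mem_filter.mp hi).2
    have h1 : (1:ℝ) ≤ r i / r j := (one_le_div hrj).mpr hij
    have hn : ⌊r i / r j⌋₊ ≠ 0 := by
      simp only [ne_eq, Nat.floor_eq_zero, not_lt]; exact h1
    have := Nat.pow_log_le_self 2 hn
    have h2 : (2:ℝ) ^ (g i) ≤ r i / r j := by
      calc (2:ℝ) ^ (g i) = ((2 ^ (g i) : ℕ) : ℝ) := by push_cast; ring
        _ ≤ (⌊r i / r j⌋₊ : ℝ) := by exact_mod_cast this
        _ ≤ r i / r j := Nat.floor_le (by linarith)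
    calc (2:ℝ) ^ (g i) * r j ≤ (r i / r j) * r j := by nlinarith
      _ = r i := by field_simp
  have hhigh : ∀ i ∈ S, r i < (2:ℝ) ^ (g i + 1) * r j := by
    intro i hi
    obtain ⟨hij, -⟩ := (Finset.mem_filter.mp hi).2
    have h1 : (1:ℝ) ≤ r i / r j := (one_le_div hrj).mpr hij
    have := Nat.lt_pow_succ_log_self (by norm_num : 1 < 2) ⌊r i / r j⌋₊
    have h2 : r i / r j < (2:ℝ) ^ (g i + 1) := by
      calc r i / r j < (⌊r i / r j⌋₊ : ℝ) + 1 := Nat.lt_floor_add_one _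
        _ ≤ (2:ℝ) ^ (g i + 1) := by
            have : (⌊r i / r j⌋₊ + 1 : ℕ) ≤ 2 ^ (g i + 1) := this
            exact_mod_cast this
    calc r i = (r i / r j) * r j := by field_simp
      _ < (2:ℝ) ^ (g i + 1) * r j := by nlinarith
  -- per class card bound
  have hcard : ∀ b : ℕ, ((S.filter fun i => g i = b).card : ℝ) ≤ 20 ^ N := by
    intro b
    set Sb := S.filter fun i => g i = b with hSb
    have hρ : (0:ℝ) < 2 ^ b * r j / 6 := by positivity
    have hmem : ∀ i ∈ Sb, i ∈ S ∧ g i = b := fun i hi => Finset.mem_filter.mp hi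
    have hcount := ball_count' p (fun i => r i / 6) (2 ^ b * r j / 6)
      (20 * (2 ^ b * r j / 6)) hρ (by positivity) Sb (p j)
      (fun i hi => by
        obtain ⟨hiS, hgi⟩ := hmem i hi
        have := hlow i hiS; rw [hgi] at this; linarith)
      (fun i hi => by
        obtain ⟨hiS, hgi⟩ := hmem i hi
        obtain ⟨-, x, hx1, hx2⟩ := (Finset.mem_filter.mp hiS).2
        have hdij : dist (p i) (p j) ≤ r i + r j :=
          calc dist (p i) (p j) ≤ dist (p i) x + dist x (p j) := dist_triangle _ _ _
            _ ≤ r i + r j := add_le_add (by rw [dist_comm]; exact mem_closedBall.mp hx1)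
                (mem_closedBall.mp hx2)
        intro y hy
        have hyi : dist y (p i) ≤ r i / 6 := mem_closedBall.mp hy
        have hri := hhigh i hiS; rw [hgi] at hri
        have hrjb : r j ≤ 2 ^ b * r j := by nlinarith [one_le_pow₀ (by norm_num : (1:ℝ) ≤ 2) (n := b)]
        have h2b : (2:ℝ) ^ (b+1) = 2 * 2 ^ b := by ring
        rw [mem_closedBall]
        calc dist y (p j) ≤ dist y (p i) + dist (p i) (p j) := dist_triangle _ _ _
          _ ≤ r i / 6 + (r i + r j) := add_le_add hyi hdij
          _ ≤ 20 * (2 ^ b * r j / 6) := by rw [h2b] at hri; nlinarith)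
      (fun i hi i' hi' hne => hdisj hne)
    have hRρ : (20 * (2 ^ b * r j / 6)) ^ N = 20 ^ N * (2 ^ b * r j / 6) ^ N :=
      mul_pow _ _ _
    rw [hRρ] at hcount
    have := mul_le_mul_iff_left₀ (pow_pos hρ N) |>.mp hcount
    exact this
  -- per class sum bound
  have hclass : ∀ b : ℕ, ∑ i ∈ S.filter (fun i => g i = b), 1 / r i
      ≤ 20 ^ N * ((1/2)^b / r j) := by
    intro b
    calc ∑ i ∈ S.filter (fun i => g i = b), 1 / r i
        ≤ ∑ i ∈ S.filter (fun i => g i = b), (1/2)^b / r j := by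
          refine Finset.sum_le_sum fun i hi => ?_
          obtain ⟨hiS, hgi⟩ := Finset.mem_filter.mp hi
          have h1 := hlow i hiS; rw [hgi] at h1
          have h2 : (0:ℝ) < 2 ^ b * r j := by positivity
          rw [div_le_div_iff₀ (hr i) hrj, one_mul]
          have : (1/2:ℝ)^b * r i ≥ (1/2)^b * (2^b * r j) := by
            have : (0:ℝ) < (1/2:ℝ)^b := by positivity
            nlinarith
          have hpow : (1/2:ℝ)^b * (2:ℝ)^b = 1 := by
            rw [← mul_pow]; norm_num
          nlinarith
      _ = ((S.filter fun i => g i = b).card : ℝ) * ((1/2)^b / r j) := by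
          rw [Finset.sum_const, nsmul_eq_mul]
      _ ≤ 20 ^ N * ((1/2)^b / r j) := by
          have := hcard b
          have hp : (0:ℝ) ≤ (1/2:ℝ)^b / r j := by positivity
          nlinarith
  -- assemble
  have hfib : ∑ i ∈ S, 1 / r i
      = ∑ b ∈ S.image g, ∑ i ∈ S.filter (fun i => g i = b), 1 / r i :=
    (Finset.sum_fiberwise_of_maps_to (fun i hi => Finset.mem_image_of_mem g hi) _).symm
  rw [hfib]
  calc ∑ b ∈ S.image g, ∑ i ∈ S.filter (fun i => g i = b), 1 / r i
      ≤ ∑ b ∈ S.image g, 20 ^ N * ((1/2)^b / r j) :=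
        Finset.sum_le_sum fun b _ => hclass b
    _ = (20 ^ N / r j) * ∑ b ∈ S.image g, ((1:ℝ)/2)^b := by
        rw [Finset.mul_sum]; refine Finset.sum_congr rfl fun b _ => by ring
    _ ≤ (20 ^ N / r j) * 2 := by
        have := geom_finset_le (S.image g)
        have hp : (0:ℝ) ≤ 20 ^ N / r j := by positivity
        nlinarith
    _ ≤ 4 * 108 ^ N / r j := by
        have h20 : (20:ℝ)^N ≤ 108^N := pow_le_pow_left₀ (by norm_num) (by norm_num) N
        rw [div_mul_eq_mul_div, div_le_div_iff₀ hrj hrj]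
        nlinarith [mul_le_mul_of_nonneg_right h20 hrj.le,
          mul_nonneg (pow_nonneg (by norm_num : (0:ℝ) ≤ 108) N) hrj.le]
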